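/- Let A be a bounded linear operator on a complex Hilbert space H and let u, v be unit vectors in H. Then |⟨Au,u⟩ − ⟨Av,v⟩| ≤ 2‖A‖·δ(u,v), where δ(u,v) = √(1 − |⟨u,v⟩|²) and ‖A‖ is the operator norm. Moreover this estimate is sharp: for the choice A = P_u − P_v (the difference of the orthogonal projections onto ℂu and ℂv) equality holds, i.e. |⟨Au,u⟩ − ⟨Av,v⟩| = 2‖A‖·δ(u,v). -/

import Mathlib

/-- The orthogonal projection of `H` onto the line `ℂ • u` spanned by a unit
vector `u`, as a continuous linear map `H →L[ℂ] H`: `P u f = ⟪u, f⟫ • u`. -/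
noncomputable def rankOneProj {H : Type*} [NormedAddCommGroup H] [InnerProductSpace ℂ H]
    (u : H) : H →L[ℂ] H :=
  (innerSL ℂ u).smulRight u

local notation "⟪" x ", " y "⟫" => @inner ℂ _ _ x y

section aux
variable {H : Type*} [NormedAddCommGroup H] [InnerProductSpace ℂ H]

lemma rankOneProj_apply (u x : H) : rankOneProj u x = ⟪u, x⟫ • u := rfl

lemma inner_expand (A : H →L[ℂ] H) (u w : H) (a b a' b' : ℂ) :
    ⟪A (a • u + b • w), a' • u + b' • w⟫
      = (starRingEnd ℂ) a * a' * ⟪A u, u⟫ + (starRingEnd ℂ) a * b' * ⟪A u, w⟫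
        + (starRingEnd ℂ) b * a' * ⟪A w, u⟫ + (starRingEnd ℂ) b * b' * ⟪A w, w⟫ := by
  simp [map_add, map_smul, inner_add_left, inner_add_right, inner_smul_left,
    inner_smul_right, smul_smul]
  ring

lemma inner_expand' (u w : H) (a b a' b' : ℂ) :
    ⟪a • u + b • w, a' • u + b' • w⟫
      = (starRingEnd ℂ) a * a' * ⟪u, u⟫ + (starRingEnd ℂ) a * b' * ⟪u, w⟫
        + (starRingEnd ℂ) b * a' * ⟪w, u⟫ + (starRingEnd ℂ) b * b' * ⟪w, w⟫ := by
  simp [inner_add_left, inner_add_right, inner_smul_left, inner_smul_right]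
  ring

lemma coburn_aux (u w : H) (hu : ‖u‖ = 1) (hw : ‖w‖ = 1) (huw : ⟪u, w⟫ = 0)
    (c : ℂ) (δ : ℝ) (hδ : 0 < δ) (hδ2 : (δ:ℝ) ^ 2 = 1 - ‖c‖ ^ 2) :
    (∀ A : H →L[ℂ] H,
      ‖⟪A u, u⟫ - ⟪A (c • u + (δ:ℂ) • w), c • u + (δ:ℂ) • w⟫‖ ≤ 2 * ‖A‖ * δ) ∧
    ‖⟪(rankOneProj u - rankOneProj (c • u + (δ:ℂ) • w)) u, u⟫
        - ⟪(rankOneProj u - rankOneProj (c • u + (δ:ℂ) • w)) (c • u + (δ:ℂ) • w),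
            c • u + (δ:ℂ) • w⟫‖
      = 2 * ‖rankOneProj u - rankOneProj (c • u + (δ:ℂ) • w)‖ * δ := by
  have cmul : ∀ z : ℂ, (starRingEnd ℂ) z * z = ((‖z‖ ^ 2 : ℝ) : ℂ) := by
    intro z
    rw [mul_comm, Complex.mul_conj]
    norm_cast
    simp [Complex.normSq_eq_norm_sq]
  have nreal : ∀ r : ℝ, 0 ≤ r → ‖((r : ℝ) : ℂ)‖ = r := by
    intro r hr
    rw [Complex.norm_real, Real.norm_eq_abs, abs_of_nonneg hr]
  have hwu : ⟪w, u⟫ = 0 := by rw [← inner_conj_symm, huw, map_zero]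
  have huu : ⟪u, u⟫ = 1 := by
    rw [inner_self_eq_norm_sq_to_K, hu]; norm_num
  have hww : ⟪w, w⟫ = 1 := by
    rw [inner_self_eq_norm_sq_to_K, hw]; norm_num
  have hδℂ : ((δ:ℂ)) ^ 2 = 1 - (starRingEnd ℂ) c * c := by
    rw [cmul c]
    push_cast
    exact_mod_cast hδ2
  set s : ℂ := 1 + (δ:ℂ) with hs
  set v : H := c • u + (δ:ℂ) • w with hv
  set f₁ : H := s • u + (-(starRingEnd ℂ) c) • w with hf₁def
  set f₂ : H := c • u + s • w with hf₂def
  -- trace identity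
  have htr : ∀ A : H →L[ℂ] H,
      (⟪A u, u⟫ - ⟪A v, v⟫) * (2 * s) = (δ:ℂ) * (⟪A f₁, f₁⟫ - ⟪A f₂, f₂⟫) := by
    intro A
    rw [hv, hf₁def, hf₂def, inner_expand, inner_expand, inner_expand]
    simp only [map_add, map_one, map_neg, Complex.conj_conj, Complex.conj_ofReal, hs]
    linear_combination (-((2 + (δ:ℂ)) * ⟪A u, u⟫ + (δ:ℂ) * ⟪A w, w⟫)) * hδℂ
  have hnormsq : ∀ (P Q : ℂ),
      ⟪P • u + Q • w, P • u + Q • w⟫ = (starRingEnd ℂ) P * P + (starRingEnd ℂ) Q * Q := by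
    intro P Q
    rw [inner_expand' u w P Q P Q, huu, hww, huw, hwu]
    ring
  have hfn : ∀ (P Q : ℂ), ‖P • u + Q • w‖ ^ 2 = ‖P‖ ^ 2 + ‖Q‖ ^ 2 := by
    intro P Q
    rw [← inner_self_eq_norm_sq (𝕜 := ℂ), hnormsq, cmul, cmul]
    simp [← Complex.ofReal_pow]
  have hcsq : ‖c‖ ^ 2 = 1 - δ ^ 2 := by linarith
  have hsn : ‖s‖ ^ 2 = (1 + δ) ^ 2 := by
    have h1 : s = ((1 + δ : ℝ) : ℂ) := by rw [hs]; push_cast; ring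
    rw [h1, nreal _ (by linarith)]
  have hf1 : ‖f₁‖ ^ 2 = 2 * (1 + δ) := by
    rw [hf₁def, hfn, hsn, norm_neg, RCLike.norm_conj, hcsq]; ring
  have hf2 : ‖f₂‖ ^ 2 = 2 * (1 + δ) := by
    rw [hf₂def, hfn, hsn, hcsq]; ring
  -- part 1
  have part1 : ∀ A : H →L[ℂ] H, ‖⟪A u, u⟫ - ⟪A v, v⟫‖ ≤ 2 * ‖A‖ * δ := by
    intro A
    have hAquad : ∀ (f : H) (hf : ‖f‖ ^ 2 = 2 * (1 + δ)), ‖⟪A f, f⟫‖ ≤ ‖A‖ * (2 * (1 + δ)) := by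
      intro f hf
      calc ‖⟪A f, f⟫‖ ≤ ‖A f‖ * ‖f‖ := norm_inner_le_norm _ _
        _ ≤ (‖A‖ * ‖f‖) * ‖f‖ := by
            have := A.le_opNorm f
            have h0 : (0:ℝ) ≤ ‖f‖ := norm_nonneg _
            nlinarith
        _ = ‖A‖ * (2 * (1 + δ)) := by rw [mul_assoc, ← sq, hf]
    have hmul := congrArg norm (htr A)
    rw [norm_mul, norm_mul, norm_mul] at hmul
    have h2n : ‖(2 : ℂ)‖ = 2 := by norm_num
    have hsnorm : ‖s‖ = 1 + δ := by
      have h1 : s = ((1 + δ : ℝ) : ℂ) := by rw [hs]; push_cast; ring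
      rw [h1, nreal _ (by linarith)]
    have hdnorm : ‖((δ:ℂ))‖ = δ := by
      exact nreal δ (le_of_lt hδ)
    rw [h2n, hsnorm, hdnorm] at hmul
    rw [show ‖⟪A u, u⟫ - ⟪A v, v⟫‖ * (2 * (1 + δ)) = ‖⟪A u, u⟫ - ⟪A v, v⟫‖ * (2 * (1 + δ)) from rfl] at hmul
    have hdiff : ‖⟪A f₁, f₁⟫ - ⟪A f₂, f₂⟫‖ ≤ 2 * (2 * (1 + δ)) * ‖A‖ := by
      calc ‖⟪A f₁, f₁⟫ - ⟪A f₂, f₂⟫‖ ≤ ‖⟪A f₁, f₁⟫‖ + ‖⟪A f₂, f₂⟫‖ := norm_sub_le _ _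
        _ ≤ ‖A‖ * (2 * (1 + δ)) + ‖A‖ * (2 * (1 + δ)) := by
            exact add_le_add (hAquad f₁ hf1) (hAquad f₂ hf2)
        _ = 2 * (2 * (1 + δ)) * ‖A‖ := by ring
    have hpos : (0:ℝ) < 2 * (1 + δ) := by linarith
    have : ‖⟪A u, u⟫ - ⟪A v, v⟫‖ * (2 * (1 + δ)) ≤ (2 * ‖A‖ * δ) * (2 * (1 + δ)) := by
      rw [hmul]
      calc δ * ‖⟪A f₁, f₁⟫ - ⟪A f₂, f₂⟫‖ ≤ δ * (2 * (2 * (1 + δ)) * ‖A‖) := by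
            exact mul_le_mul_of_nonneg_left hdiff (le_of_lt hδ)
        _ = (2 * ‖A‖ * δ) * (2 * (1 + δ)) := by ring
    exact le_of_mul_le_mul_right this hpos
  -- pointwise formula for D
  set D : H →L[ℂ] H := rankOneProj u - rankOneProj v with hD
  have hvx : ∀ x : H, ⟪v, x⟫ = (starRingEnd ℂ) c * ⟪u, x⟫ + (δ:ℂ) * ⟪w, x⟫ := by
    intro x
    rw [hv, inner_add_left, inner_smul_left, inner_smul_left, Complex.conj_ofReal]
  have hDx : ∀ x : H, D x = (⟪u, x⟫ - c * ⟪v, x⟫) • u + (-(δ:ℂ) * ⟪v, x⟫) • w := by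
    intro x
    rw [hD]
    simp only [ContinuousLinearMap.sub_apply, rankOneProj_apply]
    rw [hv]
    module
  -- norm bound ‖D x‖ ≤ δ ‖x‖
  have hDnorm_le : ‖D‖ ≤ δ := by
    apply ContinuousLinearMap.opNorm_le_bound _ (le_of_lt hδ)
    intro x
    set α := ⟪u, x⟫ with hα
    set β := ⟪w, x⟫ with hβ
    have hDx2 : ‖D x‖ ^ 2 = ‖α - c * ⟪v, x⟫‖ ^ 2 + ‖-(δ:ℂ) * ⟪v, x⟫‖ ^ 2 := by
      rw [hDx x, hfn]
    have hkey : ‖α - c * ⟪v, x⟫‖ ^ 2 + ‖-(δ:ℂ) * ⟪v, x⟫‖ ^ 2 = δ ^ 2 * (‖α‖ ^ 2 + ‖β‖ ^ 2) := by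
      have hc1 : (starRingEnd ℂ) (α - c * ⟪v, x⟫) * (α - c * ⟪v, x⟫)
            + (starRingEnd ℂ) (-(δ:ℂ) * ⟪v, x⟫) * (-(δ:ℂ) * ⟪v, x⟫)
          = ((δ:ℂ)) ^ 2 * ((starRingEnd ℂ) α * α + (starRingEnd ℂ) β * β) := by
        rw [hvx x]
        simp only [map_sub, map_mul, map_neg, map_add, Complex.conj_ofReal, Complex.conj_conj,
          ← hα, ← hβ]
        linear_combination (-(1 - (starRingEnd ℂ) c * c) * ((starRingEnd ℂ) α * α)
          + (δ:ℂ) * c * ((starRingEnd ℂ) α * β) + (δ:ℂ) * (starRingEnd ℂ) c * ((starRingEnd ℂ) β * α)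
          + ((δ:ℂ)) ^ 2 * ((starRingEnd ℂ) β * β)) * hδℂ
      rw [cmul, cmul, cmul, cmul] at hc1
      exact_mod_cast hc1
    -- Bessel
    have hbessel : ‖α‖ ^ 2 + ‖β‖ ^ 2 ≤ ‖x‖ ^ 2 := by
      set y := x - α • u - β • w with hy
      have hxy : x = (α • u + β • w) + y := by rw [hy]; abel
      have huy : ⟪u, y⟫ = 0 := by
        rw [hy]
        simp [inner_sub_right, inner_smul_right, huu, huw, hα, hu]
      have hwy : ⟪w, y⟫ = 0 := by
        rw [hy]
        simp [inner_sub_right, inner_smul_right, hww, hwu, hβ, hw]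
      have hcross : ⟪α • u + β • w, y⟫ = 0 := by
        rw [inner_add_left, inner_smul_left, inner_smul_left, huy, hwy]
        ring
      have hxsq : ‖x‖ ^ 2 = ‖α • u + β • w‖ ^ 2 + ‖y‖ ^ 2 := by
        rw [hxy, norm_add_sq (𝕜 := ℂ), hcross]
        simp
      rw [hxsq, hfn]
      nlinarith [sq_nonneg ‖y‖]
    have h2 : ‖D x‖ ^ 2 ≤ (δ * ‖x‖) ^ 2 := by
      rw [hDx2, hkey]
      calc δ ^ 2 * (‖α‖ ^ 2 + ‖β‖ ^ 2) ≤ δ ^ 2 * ‖x‖ ^ 2 := by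
            exact mul_le_mul_of_nonneg_left hbessel (sq_nonneg δ)
        _ = (δ * ‖x‖) ^ 2 := by ring
    have := Real.sqrt_le_sqrt (le_of_lt (lt_of_le_of_lt h2 (lt_add_one _)))
    nlinarith [norm_nonneg (D x), norm_nonneg x, mul_nonneg (le_of_lt hδ) (norm_nonneg x)]
  -- values of ⟪D u, u⟫ and ⟪D v, v⟫
  have hvu : ⟪v, u⟫ = (starRingEnd ℂ) c := by
    rw [hv, inner_add_left, inner_smul_left, inner_smul_left, Complex.conj_ofReal, huu, hwu]
    ring
  have huv : ⟪u, v⟫ = c := by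
    rw [hv, inner_add_right, inner_smul_right, inner_smul_right, huu, huw]
    ring
  have hvv : ⟪v, v⟫ = 1 := by
    rw [hvx v, huv]
    rw [show ⟪w, v⟫ = (δ:ℂ) by
      rw [hv, inner_add_right, inner_smul_right, inner_smul_right, hwu, hww]; ring]
    linear_combination hδℂ
  have hDu : ⟪D u, u⟫ = ((δ:ℂ)) ^ 2 := by
    rw [hD]
    simp only [ContinuousLinearMap.sub_apply, rankOneProj_apply, inner_sub_left,
      inner_smul_left, huu, hvu, Complex.conj_conj, map_one]
    linear_combination -hδℂ
  have hDv : ⟪D v, v⟫ = -((δ:ℂ)) ^ 2 := by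
    rw [hD]
    simp only [ContinuousLinearMap.sub_apply, rankOneProj_apply, inner_sub_left,
      inner_smul_left, huv, hvv, map_one]
    linear_combination hδℂ
  have hLHS : ‖⟪D u, u⟫ - ⟪D v, v⟫‖ = 2 * δ ^ 2 := by
    rw [hDu, hDv, show ((δ:ℂ)) ^ 2 - -((δ:ℂ)) ^ 2 = ((2 * δ ^ 2 : ℝ) : ℂ) by push_cast; ring]
    exact nreal _ (by positivity)
  have hDge : δ ≤ ‖D‖ := by
    have h1 := part1 D
    rw [hLHS] at h1
    have h2 : 2 * δ * δ ≤ 2 * δ * ‖D‖ := by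
      calc 2 * δ * δ = 2 * δ ^ 2 := by ring
        _ ≤ 2 * ‖D‖ * δ := h1
        _ = 2 * δ * ‖D‖ := by ring
    exact le_of_mul_le_mul_left h2 (by positivity)
  have hDnorm : ‖D‖ = δ := le_antisymm hDnorm_le hDge
  refine ⟨part1, ?_⟩
  rw [hLHS, hDnorm]
  ring

end aux

/-- Coburn's Lipschitz estimate for Berezin transforms.
For every bounded operator `A` on a complex Hilbert space and unit vectors
`u, v` one has `|⟨Au,u⟩ − ⟨Av,v⟩| ≤ 2‖A‖·δ(u,v)` with
`δ(u,v) = √(1 − |⟨u,v⟩|²)`; and the estimate is sharp: equality holds for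
`A = P_u − P_v`. -/
theorem berezin_lipschitz {H : Type*} [NormedAddCommGroup H] [InnerProductSpace ℂ H]
    (u v : H) (hu : ‖u‖ = 1) (hv : ‖v‖ = 1) :
    (∀ A : H →L[ℂ] H,
      ‖(inner ℂ (A u) u : ℂ) - (inner ℂ (A v) v : ℂ)‖
        ≤ 2 * ‖A‖ * Real.sqrt (1 - ‖(inner ℂ u v : ℂ)‖ ^ 2)) ∧
    ‖(inner ℂ ((rankOneProj u - rankOneProj v) u) u : ℂ)
        - (inner ℂ ((rankOneProj u - rankOneProj v) v) v : ℂ)‖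
      = 2 * ‖rankOneProj u - rankOneProj v‖ * Real.sqrt (1 - ‖(inner ℂ u v : ℂ)‖ ^ 2) := by
  have hu0 : u ≠ 0 := by intro h; rw [h, norm_zero] at hu; norm_num at hu
  have hv0 : v ≠ 0 := by intro h; rw [h, norm_zero] at hv; norm_num at hv
  have hCS : ‖⟪u, v⟫‖ ≤ 1 := by
    have := norm_inner_le_norm (𝕜 := ℂ) u v
    rw [hu, hv] at this
    simpa using this
  rcases eq_or_lt_of_le hCS with heq | hlt
  · -- degenerate case : |⟨u,v⟩| = 1
    have hsqrt : Real.sqrt (1 - ‖⟪u, v⟫‖ ^ 2) = 0 := by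
      rw [heq]; simp
    obtain ⟨r, hr0, hvr⟩ := (norm_inner_eq_norm_iff (𝕜 := ℂ) hu0 hv0).1
      (by rw [hu, hv, mul_one]; exact heq)
    have hr1 : (starRingEnd ℂ) r * r = 1 := by
      have h1 : ‖r‖ = 1 := by
        have h2 := hv
        rw [hvr, norm_smul, hu, mul_one] at h2
        exact h2
      rw [mul_comm, Complex.mul_conj]
      rw [Complex.normSq_eq_norm_sq, h1]
      norm_num
    have hAeq : ∀ A : H →L[ℂ] H, (inner ℂ (A v) v : ℂ) = inner ℂ (A u) u := by
      intro A
      rw [hvr, map_smul, inner_smul_left, inner_smul_right, ← mul_assoc, hr1, one_mul]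
    constructor
    · intro A
      rw [hAeq A, hsqrt, sub_self, norm_zero, mul_zero]
    · rw [hAeq (rankOneProj u - rankOneProj v), hsqrt, sub_self, norm_zero, mul_zero]
  · -- main case : |⟨u,v⟩| < 1
    set c : ℂ := ⟪u, v⟫ with hc
    set δ : ℝ := Real.sqrt (1 - ‖c‖ ^ 2) with hδdef
    have hpos : 0 < 1 - ‖c‖ ^ 2 := by nlinarith [norm_nonneg c]
    have hδpos : 0 < δ := Real.sqrt_pos.2 hpos
    have hδ2 : δ ^ 2 = 1 - ‖c‖ ^ 2 := Real.sq_sqrt (le_of_lt hpos)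
    have hvu : ⟪v, u⟫ = (starRingEnd ℂ) c := by rw [hc, inner_conj_symm]
    have huu : ⟪u, u⟫ = (1:ℂ) := by
      rw [inner_self_eq_norm_sq_to_K, hu]; norm_num
    have hvv : ⟪v, v⟫ = (1:ℂ) := by
      rw [inner_self_eq_norm_sq_to_K, hv]; norm_num
    have hdiffnorm : ‖v - c • u‖ = δ := by
      have hccc : (starRingEnd ℂ) c * c = ((‖c‖ ^ 2 : ℝ) : ℂ) := by
        rw [mul_comm, Complex.mul_conj]
        norm_cast
        simp [Complex.normSq_eq_norm_sq]
      have hδℂ2 : (((δ:ℝ)) : ℂ) ^ 2 = 1 - (starRingEnd ℂ) c * c := by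
        rw [hccc]
        push_cast
        exact_mod_cast hδ2
      have hinner : ⟪v - c • u, v - c • u⟫ = ((δ ^ 2 : ℝ) : ℂ) := by
        rw [inner_sub_left, inner_sub_right, inner_sub_right, inner_smul_left,
          inner_smul_right, inner_smul_left, inner_smul_right, huu, hvv, hvu, ← hc]
        push_cast
        linear_combination -hδℂ2
      have h2 : (‖v - c • u‖ ^ 2 : ℝ) = δ ^ 2 := by
        have h3 := inner_self_eq_norm_sq (𝕜 := ℂ) (v - c • u)
        rw [hinner] at h3
        simpa [← Complex.ofReal_pow] using h3.symm
      nlinarith [norm_nonneg (v - c • u)]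
    set w : H := (((δ⁻¹ : ℝ) : ℂ)) • (v - c • u) with hwdef
    have hδℂ0 : ((δ : ℝ) : ℂ) ≠ 0 := by
      exact_mod_cast ne_of_gt hδpos
    have hw : ‖w‖ = 1 := by
      rw [hwdef, norm_smul, hdiffnorm]
      rw [show ‖(((δ⁻¹ : ℝ) : ℂ))‖ = |δ⁻¹| by rw [Complex.norm_real, Real.norm_eq_abs]]
      rw [abs_of_pos (by positivity)]
      field_simp
    have huw : ⟪u, w⟫ = 0 := by
      rw [hwdef, inner_smul_right, inner_sub_right, inner_smul_right, huu, ← hc]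
      ring
    have hvdecomp : c • u + ((δ : ℝ) : ℂ) • w = v := by
      rw [hwdef, smul_smul]
      rw [show ((δ : ℝ) : ℂ) * ((δ⁻¹ : ℝ) : ℂ) = 1 by
        push_cast
        field_simp]
      rw [one_smul]
      abel
    have haux := coburn_aux u w hu hw huw c δ hδpos hδ2
    rw [hvdecomp] at haux
    exact haux
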